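/- Let n ∈ ℕ and suppose the linear operator T : ℂ_n[z] → ℂ[z] maps every stable polynomial of degree at most n to a stable polynomial or to 0. If there exists a strictly stable polynomial f of degree n with T(f) = 0, then T(g) is stable or 0 for every g ∈ ℂ[z] with deg g ≤ n. -/

import Mathlib

open Polynomial

noncomputable section

/-- A univariate complex polynomial is stable if it does not vanish on the open upper
half-plane. -/
def UStable (f : Polynomial ℂ) : Prop := ∀ z : ℂ, 0 < z.im → f.eval z ≠ 0

/-- A real univariate polynomial is hyperbolic if it is nonzero and all its (complex)
zeros are real. -/
def Hyperbolic (p : Polynomial ℝ) : Prop :=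
  p ≠ 0 ∧ ∀ z : ℂ, Polynomial.aeval z p = 0 → z.im = 0

/-- Merge two lists alternately: `mergeAlt [a1,a2,...] [b1,b2,...] = [a1,b1,a2,b2,...]`. -/
def mergeAlt : List ℝ → List ℝ → List ℝ
  | [], l => l
  | a :: as, l => a :: mergeAlt l as
termination_by a b => a.length + b.length
decreasing_by simp [List.length]; omega

/-- `AltSeq α β` : the alternation α₁ ≤ β₁ ≤ α₂ ≤ β₂ ≤ ⋯ holds (lengths differ by at
most one, starting with α). -/
def AltSeq (α β : List ℝ) : Prop :=
  (α.length = β.length ∨ α.length = β.length + 1) ∧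
    List.Chain' (· ≤ ·) (mergeAlt α β)

/-- The zeros of two real polynomials interlace. -/
def ZerosInterlace (P Q : Polynomial ℝ) : Prop :=
  (P.degree ≤ 1 ∧ Q.degree ≤ 1) ∨
    ∃ α β : List ℝ, P.roots = ↑α ∧ Q.roots = ↑β ∧ (AltSeq α β ∨ AltSeq β α)

/-- Evaluation of a bivariate polynomial `F ∈ ℂ[z][w]` at `(z, w)`. -/
def evalBiv (F : Polynomial (Polynomial ℂ)) (z w : ℂ) : ℂ :=
  (F.map (Polynomial.evalRingHom z)).eval w

/-- A bivariate polynomial is stable if it does not vanish when both coordinates are in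
the open upper half-plane. -/
def BStable (F : Polynomial (Polynomial ℂ)) : Prop :=
  ∀ z w : ℂ, 0 < z.im → 0 < w.im → evalBiv F z w ≠ 0

/-- The canonical map `ℝ[z][w] → ℂ[z][w]`. -/
def bivToC (F : Polynomial (Polynomial ℝ)) : Polynomial (Polynomial ℂ) :=
  F.map (Polynomial.mapRingHom (algebraMap ℝ ℂ))

/-- A real bivariate polynomial is (real) stable if its complexification is stable. -/
def RStableBiv (F : Polynomial (Polynomial ℝ)) : Prop := BStable (bivToC F)

/-- The extension of a linear operator `T` on `ℂ[z]` to `ℂ[z][w]` determined by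
`T(z^k w^ℓ) = T(z^k) w^ℓ`. -/
def extT (T : Polynomial ℂ →ₗ[ℂ] Polynomial ℂ) (F : Polynomial (Polynomial ℂ)) :
    Polynomial (Polynomial ℂ) :=
  F.sum fun k c => Polynomial.C (T c) * Polynomial.X ^ k

/-- The extension of a linear operator `T` on `ℝ[z]` to `ℝ[z][w]` determined by
`T(z^k w^ℓ) = T(z^k) w^ℓ`. -/
def extTR (T : Polynomial ℝ →ₗ[ℝ] Polynomial ℝ) (F : Polynomial (Polynomial ℝ)) :
    Polynomial (Polynomial ℝ) :=
  F.sum fun k c => Polynomial.C (T c) * Polynomial.X ^ k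


/-- A univariate complex polynomial is strictly stable if it does not vanish on the
closed upper half-plane. -/
def StrictlyUStable (f : Polynomial ℂ) : Prop := ∀ z : ℂ, 0 ≤ z.im → f.eval z ≠ 0

/-- distance bound to a root in the lower half plane -/
lemma key1 (r : ℂ) (hr : r.im < 0) (z : ℂ) (hz : 0 ≤ z.im) :
    min (-r.im) 1 / (2 * ‖r‖ + 2) * (1 + ‖z‖) ≤ ‖z - r‖ := by
  set a := ‖z‖ with ha
  set b := ‖r‖ with hb
  have ha0 : 0 ≤ a := norm_nonneg z
  have hb0 : 0 ≤ b := norm_nonneg r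
  have hm : 0 < min (-r.im) 1 := lt_min (by linarith) one_pos
  have h1 : min (-r.im) 1 ≤ ‖z - r‖ := by
    have him : (z - r).im = z.im - r.im := by simp
    have h2 : |(z - r).im| ≤ ‖z - r‖ := Complex.abs_im_le_norm _
    rw [him, abs_of_nonneg (by linarith)] at h2
    have := min_le_left (-r.im) 1
    linarith
  have h2 : a - b ≤ ‖z - r‖ := by
    simpa using norm_sub_norm_le z r
  rcases le_total a (2 * b + 1) with h | h
  · have : min (-r.im) 1 / (2 * b + 2) * (1 + a) ≤ min (-r.im) 1 := by
      rw [div_mul_eq_mul_div, div_le_iff₀ (by linarith)]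
      nlinarith [hm.le]
    linarith
  · have hc : min (-r.im) 1 / (2 * b + 2) ≤ 1 / 2 := by
      apply div_le_div₀ (by norm_num) (min_le_right _ _) (by norm_num) (by linarith)
    have h3 := mul_le_mul_of_nonneg_right hc (by linarith : (0:ℝ) ≤ 1 + a)
    linarith

/-- growth bound for polynomials of degree ≤ n -/
lemma key2 (n : ℕ) (g : Polynomial ℂ) (hg : g.degree ≤ (n : WithBot ℕ)) :
    ∃ C : ℝ, 0 ≤ C ∧ ∀ z : ℂ, ‖g.eval z‖ ≤ C * (1 + ‖z‖) ^ n := by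
  refine ⟨∑ i ∈ Finset.range (n + 1), ‖g.coeff i‖, Finset.sum_nonneg fun i _ => norm_nonneg _, fun z => ?_⟩
  have hnd : g.natDegree ≤ n := natDegree_le_iff_degree_le.2 hg
  have heval : g.eval z = ∑ i ∈ Finset.range (n + 1), g.coeff i * z ^ i := by
    rw [eval_eq_sum_range' (lt_of_le_of_lt hnd (Nat.lt_succ_self n))]
  rw [heval]
  calc ‖∑ i ∈ Finset.range (n + 1), g.coeff i * z ^ i‖
      ≤ ∑ i ∈ Finset.range (n + 1), ‖g.coeff i * z ^ i‖ := by
        simpa using norm_sum_le (Finset.range (n+1)) (fun i => g.coeff i * z ^ i)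
    _ ≤ ∑ i ∈ Finset.range (n + 1), ‖g.coeff i‖ * (1 + ‖z‖) ^ n := by
        apply Finset.sum_le_sum
        intro i hi
        rw [norm_mul, norm_pow]
        apply mul_le_mul_of_nonneg_left _ (norm_nonneg _)
        calc ‖z‖ ^ i ≤ (1 + ‖z‖) ^ i := by
              apply pow_le_pow_left₀ (norm_nonneg z); linarith [norm_nonneg z]
          _ ≤ (1 + ‖z‖) ^ n := by
              apply pow_le_pow_right₀ (by linarith [norm_nonneg z])
              exact Nat.lt_succ_iff.mp (Finset.mem_range.mp hi)
    _ = (∑ i ∈ Finset.range (n + 1), ‖g.coeff i‖) * (1 + ‖z‖) ^ n := by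
        rw [Finset.sum_mul]

/-- multiset product comparison -/
lemma key3 (s : Multiset ℂ) (F G : ℂ → ℝ) (h : ∀ r ∈ s, 0 ≤ F r ∧ F r ≤ G r) :
    (s.map F).prod ≤ (s.map G).prod := by
  induction s using Multiset.induction_on with
  | empty => simp
  | cons a t ih =>
    simp only [Multiset.map_cons, Multiset.prod_cons]
    have ha := h a (Multiset.mem_cons_self a t)
    have ht : ∀ r ∈ t, 0 ≤ F r ∧ F r ≤ G r := fun r hr => h r (Multiset.mem_cons_of_mem hr)
    have hFt : 0 ≤ (t.map F).prod := Multiset.prod_nonneg (by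
      intro x hx; obtain ⟨r, hr, rfl⟩ := Multiset.mem_map.mp hx; exact (ht r hr).1)
    have := ih ht
    nlinarith [ha.1, ha.2]


lemma key4 (n : ℕ) (f : Polynomial ℂ) (hf : StrictlyUStable f)
    (hdeg : f.degree = (n : WithBot ℕ)) :
    ∃ K : ℝ, 0 < K ∧ ∀ z : ℂ, 0 ≤ z.im → K * (1 + ‖z‖) ^ n ≤ ‖f.eval z‖ := by
  have hf0 : f ≠ 0 := fun h => hf 0 le_rfl (by simp [h])
  have hsplit : f.Splits := IsAlgClosed.splits f
  have hcard : f.roots.card = n := by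
    rw [splits_iff_card_roots.mp hsplit, natDegree_eq_of_degree_eq_some hdeg]
  have hroots : ∀ r ∈ f.roots, r.im < 0 := by
    intro r hr
    by_contra h
    exact hf r (le_of_not_gt h) ((mem_roots hf0).mp hr)
  set cfun : ℂ → ℝ := fun r => min (-r.im) 1 / (2 * ‖r‖ + 2) with hcfun
  have hcpos : ∀ r ∈ f.roots, 0 < cfun r := by
    intro r hr
    apply div_pos (lt_min (by linarith [hroots r hr]) one_pos) (by positivity)
  refine ⟨‖f.leadingCoeff‖ * (f.roots.map cfun).prod, ?_, ?_⟩
  · apply mul_pos (by simpa using leadingCoeff_ne_zero.mpr hf0)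
    apply Multiset.prod_pos
    intro x hx
    obtain ⟨r, hr, rfl⟩ := Multiset.mem_map.mp hx
    exact hcpos r hr
  · intro z hz
    have heval : f.eval z = f.leadingCoeff * (f.roots.map (fun r => z - r)).prod := by
      conv_lhs => rw [hsplit.eq_prod_roots]
      rw [eval_mul, eval_C, eval_multiset_prod]
      simp [Multiset.map_map]
    rw [heval, norm_mul, show ‖(f.roots.map (fun r => z - r)).prod‖ = ((f.roots.map (fun r => z - r)).map (‖·‖)).prod from map_multiset_prod (normHom (α := ℂ)) _, Multiset.map_map]
    have hle : (f.roots.map (fun r => cfun r * (1 + ‖z‖))).prod ≤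
        (f.roots.map ((‖·‖) ∘ fun r => z - r)).prod := by
      apply key3
      intro r hr
      constructor
      · exact mul_nonneg (hcpos r hr).le (by positivity)
      · exact key1 r (hroots r hr) z hz
    have heq : (f.roots.map (fun r => cfun r * (1 + ‖z‖))).prod =
        (f.roots.map cfun).prod * (1 + ‖z‖) ^ n := by
      rw [Multiset.prod_map_mul]
      congr 1
      rw [Multiset.map_const', Multiset.prod_replicate, hcard]
    rw [heq] at hle
    rw [mul_assoc]
    exact mul_le_mul_of_nonneg_left hle (norm_nonneg _)


/-- **Lemma (degenerate stability preservers).** Suppose `T : ℂ_n[z] → ℂ[z]` maps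
every stable polynomial of degree at most `n` to a stable polynomial or to `0`, and
`T` annihilates some strictly stable polynomial of degree `n`. Then `T(g)` is stable
or `0` for every `g` of degree at most `n`. -/
theorem stmt_13 (n : ℕ) (T : Polynomial ℂ →ₗ[ℂ] Polynomial ℂ)
    (hT : ∀ f : Polynomial ℂ, f.degree ≤ (n : WithBot ℕ) → UStable f →
      (UStable (T f) ∨ T f = 0))
    (f : Polynomial ℂ) (hf : StrictlyUStable f) (hdeg : f.degree = (n : WithBot ℕ))
    (hker : T f = 0) :
    ∀ g : Polynomial ℂ, g.degree ≤ (n : WithBot ℕ) → (UStable (T g) ∨ T g = 0) := by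
  intro g hg
  obtain ⟨K, hK, hKb⟩ := key4 n f hf hdeg
  obtain ⟨Cg, hCg, hCb⟩ := key2 n g hg
  set M : ℝ := (Cg + 1) / K with hM
  have hM0 : 0 < M := div_pos (by linarith) hK
  have hbound : ∀ z : ℂ, 0 ≤ z.im →
      ‖g.eval z‖ ≤ M * ‖f.eval z‖ := by
    intro z hz
    have h1 := hKb z hz
    have h2 := hCb z
    have hpow : (0:ℝ) ≤ (1 + ‖z‖) ^ n := by positivity
    have h3 := mul_le_mul_of_nonneg_left h1 hM0.le
    have heq : M * (K * (1 + ‖z‖) ^ n) = (Cg + 1) * (1 + ‖z‖) ^ n := by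
      rw [hM]; field_simp
    rw [heq] at h3
    linarith
  set c : ℂ := ((1 / (2 * M) : ℝ) : ℂ) with hc
  have hc0 : c ≠ 0 := Complex.ofReal_ne_zero.mpr (by positivity)
  have hcabs : ‖c‖ = 1 / (2 * M) := by
    rw [hc, Complex.norm_real, Real.norm_eq_abs, abs_of_pos (by positivity)]
  have hTh : T (f + c • g) = c • T g := by rw [map_add, map_smul, hker, zero_add]
  have hstab : UStable (f + c • g) := by
    intro z hz heval0
    have hz' : 0 ≤ z.im := hz.le
    have hfz : (0:ℝ) < ‖f.eval z‖ := by
      simpa using (norm_pos_iff.mpr (hf z hz'))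
    have h1 : ‖c * g.eval z‖ ≤ ‖f.eval z‖ / 2 := by
      rw [norm_mul, hcabs]
      have h4 := mul_le_mul_of_nonneg_left (hbound z hz') (by positivity : (0:ℝ) ≤ 1 / (2 * M))
      have heq : 1 / (2 * M) * (M * ‖f.eval z‖) = ‖f.eval z‖ / 2 := by
        field_simp
      rw [heq] at h4
      exact h4
    rw [eval_add] at heval0
    have hfeq : f.eval z = -((c • g).eval z) := by linear_combination heval0
    have : (c • g).eval z = c * g.eval z := by simp
    rw [this] at hfeq
    have habs : ‖f.eval z‖ = ‖c * g.eval z‖ := by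
      rw [hfeq, norm_neg]
    linarith
  have hdeg' : (f + c • g).degree ≤ (n : WithBot ℕ) :=
    le_trans (degree_add_le _ _) (max_le hdeg.le (le_trans (degree_smul_le _ _) hg))
  rcases hT _ hdeg' hstab with H | H
  · left
    rw [hTh] at H
    intro z hz
    have h5 := H z hz
    have : (c • T g).eval z = c * (T g).eval z := by simp
    rw [this] at h5
    exact fun h => h5 (by rw [h, mul_zero])
  · right
    rw [hTh] at H
    exact (smul_eq_zero.mp H).resolve_left hc0
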